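/- Let a > 0, s > 0 be real and g ∈ ℂ. Then the infimum over all pairs (W, w) ∈ ℂ × (0,∞) of the weighted mean squared error w·(|W|²·(a·|g|² + s) + a·(1 − 2·Re(W·g))) − log(w·a) equals 1 − log(1 + a·|g|²/s), and it is attained exactly at W = a·conj(g)/(a·|g|² + s) and w = 1/a + |g|²/s. -/

import Mathlib

/-- Fully minimized weighted MSE: the infimum over `(W, w) ∈ ℂ × (0,∞)` of
`w·ε(W) − log(w·a)` equals `1 − log(1 + a·|g|²/s)`, attained exactly at
`W = a·conj(g)/(a·|g|²+s)` and `w = 1/a + |g|²/s`. -/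
theorem stmt_3 (a s : ℝ) (ha : 0 < a) (hs : 0 < s) (g : ℂ)
    (ξ : ℂ → ℝ → ℝ)
    (hξ : ∀ (W : ℂ) (w : ℝ), ξ W w =
      w * (‖W‖ ^ 2 * (a * ‖g‖ ^ 2 + s) + a * (1 - 2 * (W * g).re))
        - Real.log (w * a))
    (Wopt : ℂ)
    (hWopt : Wopt = (a : ℂ) * (starRingEnd ℂ) g / ((a * ‖g‖ ^ 2 + s : ℝ) : ℂ))
    (wopt : ℝ) (hwopt : wopt = 1 / a + ‖g‖ ^ 2 / s) :
    (∀ (W : ℂ) (w : ℝ), 0 < w →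
        1 - Real.log (1 + a * ‖g‖ ^ 2 / s) ≤ ξ W w) ∧
      (0 < wopt ∧ ξ Wopt wopt = 1 - Real.log (1 + a * ‖g‖ ^ 2 / s)) ∧
      (∀ (W : ℂ) (w : ℝ), 0 < w →
        ξ W w = 1 - Real.log (1 + a * ‖g‖ ^ 2 / s) → W = Wopt ∧ w = wopt) := by
  have hg : (‖g‖) ^ 2 = Complex.normSq g := Complex.sq_norm g
  set c := a * ‖g‖ ^ 2 + s with hc_def
  have hc : 0 < c := by positivity
  have hcn : c = a * Complex.normSq g + s := by rw [hc_def, hg]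
  have hlogE : Real.log (1 + a * ‖g‖ ^ 2 / s) = Real.log c - Real.log s := by
    have : 1 + a * ‖g‖ ^ 2 / s = c / s := by
      field_simp [hc_def]; ring
    rw [this, Real.log_div hc.ne' hs.ne']
  -- key identity: completing the square
  have hkey : ∀ W : ℂ, ‖W‖ ^ 2 * c + a * (1 - 2 * (W * g).re)
      = c * ‖W - Wopt‖ ^ 2 + a * s / c := by
    intro W
    rw [Complex.sq_norm, Complex.sq_norm, Complex.normSq_sub]
    have hconj : (starRingEnd ℂ) Wopt = (a : ℂ) * g / (c : ℂ) := by
      rw [hWopt]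
      rw [map_div₀, map_mul]
      simp [Complex.conj_ofReal]
    rw [hconj]
    have hre : (W * ((a : ℂ) * g / (c : ℂ))).re = a / c * (W * g).re := by
      have h : W * ((a : ℂ) * g / (c : ℂ)) = ((a / c : ℝ) : ℂ) * (W * g) := by
        push_cast; ring
      rw [h, Complex.re_ofReal_mul]
    have hnsq : Complex.normSq Wopt = a ^ 2 * Complex.normSq g / c ^ 2 := by
      rw [hWopt]
      simp [Complex.normSq_div, Complex.normSq_mul, Complex.normSq_conj,
        Complex.normSq_ofReal]
      ring
    rw [hre, hnsq, hcn]
    have hd : a * Complex.normSq g + s ≠ 0 := by rw [← hcn]; exact hc.ne'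
    field_simp
    ring
  -- decomposition of ξ
  have hξ' : ∀ (W : ℂ) (w : ℝ), 0 < w → ξ W w
      = w * c * ‖W - Wopt‖ ^ 2
        + (w * (a * s / c) - Real.log (w * (a * s / c)))
        + (Real.log s - Real.log c) := by
    intro W w hw
    rw [hξ]
    rw [show ‖W‖ ^ 2 * c + a * (1 - 2 * (W * g).re)
        = c * ‖W - Wopt‖ ^ 2 + a * s / c from hkey W]
    have l1 : Real.log (w * a) = Real.log w + Real.log a :=
      Real.log_mul hw.ne' ha.ne'
    have l2 : Real.log (w * (a * s / c))
        = Real.log w + Real.log a + Real.log s - Real.log c := by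
      rw [Real.log_mul hw.ne' (by positivity),
        Real.log_div (by positivity) hc.ne', Real.log_mul ha.ne' hs.ne']
      ring
    rw [l1, l2]; ring
  have hwopt_pos : 0 < wopt := by rw [hwopt]; positivity
  have hwoptc : wopt = c / (a * s) := by
    rw [hwopt, hc_def]; field_simp; ring
  refine ⟨?_, ⟨hwopt_pos, ?_⟩, ?_⟩
  · -- lower bound
    intro W w hw
    rw [hξ' W w hw, hlogE]
    have ht : 0 < w * (a * s / c) := by positivity
    have h1 : Real.log (w * (a * s / c)) ≤ w * (a * s / c) - 1 :=
      Real.log_le_sub_one_of_pos ht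
    have h2 : 0 ≤ w * c * ‖W - Wopt‖ ^ 2 := by positivity
    nlinarith
  · -- value at optimum
    rw [hξ' Wopt wopt hwopt_pos, hlogE]
    have hW0 : ‖Wopt - Wopt‖ ^ 2 = 0 := by simp
    have ht1 : wopt * (a * s / c) = 1 := by
      rw [hwoptc]; field_simp
    rw [hW0, ht1]
    simp only [Real.log_one]
    ring
  · -- uniqueness
    intro W w hw heq
    rw [hξ' W w hw, hlogE] at heq
    have ht : 0 < w * (a * s / c) := by positivity
    have h1 : Real.log (w * (a * s / c)) ≤ w * (a * s / c) - 1 :=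
      Real.log_le_sub_one_of_pos ht
    have h2 : 0 ≤ w * c * ‖W - Wopt‖ ^ 2 := by positivity
    have hd0 : w * c * ‖W - Wopt‖ ^ 2 = 0 ∧
        w * (a * s / c) - Real.log (w * (a * s / c)) = 1 := by
      constructor <;> nlinarith
    have ht1 : w * (a * s / c) = 1 := by
      by_contra hne
      have := Real.log_lt_sub_one_of_pos ht hne
      nlinarith [hd0.2]
    constructor
    · have h4 : ‖W - Wopt‖ = 0 := by
        rcases mul_eq_zero.mp hd0.1 with h | h
        · exact absurd h (by positivity : (0:ℝ) < w * c).ne'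
        · exact sq_eq_zero_iff.mp h
      exact sub_eq_zero.mp (norm_eq_zero.mp h4)
    · have has : (0:ℝ) < a * s := by positivity
      have h3 : w * (a * s) = c := by
        have h := ht1
        field_simp at h
        linarith
      rw [hwoptc, eq_div_iff has.ne']
      linarith
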